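/- For k ∈ (0,1) and x ∈ (0,1): ∫₀¹ sign(x-t) |x-t|^{k-1} (1-t)^{(1-k)/2} t^{-(1+k)/2} dt = π / sin((1-k)π/2). -/

import Mathlib

open Real MeasureTheory Set intervalIntegral

set_option maxHeartbeats 1000000

lemma subst_eq {s : Set ℝ} (hs : MeasurableSet s) {φ φ' : ℝ → ℝ}
    (hd : ∀ u ∈ s, HasDerivAt φ (φ' u) u) (hinj : Set.InjOn φ s) (g : ℝ → ℝ) :
    ∫ t in φ '' s, g t = ∫ u in s, |φ' u| * g (φ u) := by
  simpa [smul_eq_mul] using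
    MeasureTheory.integral_image_eq_integral_abs_deriv_smul hs
      (fun u hu => (hd u hu).hasDerivWithinAt) hinj g

lemma subst_int {s : Set ℝ} (hs : MeasurableSet s) {φ φ' : ℝ → ℝ}
    (hd : ∀ u ∈ s, HasDerivAt φ (φ' u) u) (hinj : Set.InjOn φ s) (g : ℝ → ℝ) :
    IntegrableOn g (φ '' s) ↔ IntegrableOn (fun u => |φ' u| * g (φ u)) s := by
  simpa [smul_eq_mul] using
    MeasureTheory.integrableOn_image_iff_integrableOn_abs_deriv_smul hs
      (fun u hu => (hd u hu).hasDerivWithinAt) hinj g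

lemma integrableOn_aux {p q : ℝ} (hp : -1 < p) (hq : -1 < q) {c : ℝ → ℝ}
    (hc : ContinuousOn c (Icc 0 1)) :
    IntegrableOn (fun s : ℝ => s ^ p * (1 - s) ^ q * c s) (Ioo (0:ℝ) 1) := by
  have h12 : (0:ℝ) ≤ 1/2 := by norm_num
  have hIcc1 : Icc (0:ℝ) (1/2) ⊆ Icc 0 1 := Icc_subset_Icc le_rfl (by norm_num)
  have hIcc2 : Icc (1/2:ℝ) 1 ⊆ Icc 0 1 := Icc_subset_Icc (by norm_num) le_rfl
  have h1 : IntegrableOn (fun s : ℝ => s ^ p * (1 - s) ^ q * c s) (Icc 0 (1/2)) := by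
    have hbase : IntegrableOn (fun s : ℝ => s ^ p) (Icc (0:ℝ) (1/2)) := by
      rw [integrableOn_Icc_iff_integrableOn_Ioc]
      exact (intervalIntegrable_rpow' hp (a := 0) (b := 1/2)).1
    have hcont : ContinuousOn (fun s : ℝ => (1 - s) ^ q * c s) (Icc (0:ℝ) (1/2)) := by
      refine ContinuousOn.mul ?_ (hc.mono hIcc1)
      refine ContinuousOn.rpow_const (by fun_prop) ?_
      intro z hz
      left
      simp only [mem_Icc] at hz
      intro h'
      nlinarith [hz.2]
    have := IntegrableOn.continuousOn_mul hcont hbase isCompact_Icc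
    refine this.congr_fun (fun z _ => by ring) measurableSet_Icc
  have h2 : IntegrableOn (fun s : ℝ => s ^ p * (1 - s) ^ q * c s) (Icc (1/2) 1) := by
    have hbase : IntegrableOn (fun s : ℝ => (1 - s) ^ q) (Icc (1/2:ℝ) 1) := by
      rw [integrableOn_Icc_iff_integrableOn_Ioc]
      have : IntervalIntegrable (fun s : ℝ => (1 - s) ^ q) volume (1/2) 1 := by
        have := (intervalIntegrable_rpow' hq (a := 0) (b := 1/2)).comp_sub_left 1
        norm_num at this
        exact this.symm
      exact this.1
    have hcont : ContinuousOn (fun s : ℝ => s ^ p * c s) (Icc (1/2:ℝ) 1) := by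
      refine ContinuousOn.mul ?_ (hc.mono hIcc2)
      refine ContinuousOn.rpow_const (by fun_prop) ?_
      intro z hz
      simp only [mem_Icc] at hz
      left; intro h'; nlinarith [hz.1]
    have := IntegrableOn.continuousOn_mul hcont hbase isCompact_Icc
    refine this.congr_fun (fun z _ => by ring) measurableSet_Icc
  exact ((h1.union h2).mono_set (fun z hz => by
    rcases le_total z (1/2) with h | h
    · exact Or.inl ⟨hz.1.le, h⟩
    · exact Or.inr ⟨h, hz.2.le⟩))

lemma beta_eval {c : ℝ} (h0 : 0 < c) (h1 : c < 1) :
    ∫ t in Ioo (0:ℝ) 1, t ^ (c - 1) * (1 - t) ^ (-c) = π / Real.sin (π * c) := by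
  have key : Complex.betaIntegral c (1 - c)
      = ((∫ t in (0:ℝ)..1, t ^ (c - 1) * (1 - t) ^ (-c) : ℝ) : ℂ) := by
    rw [← intervalIntegral.integral_ofReal]
    unfold Complex.betaIntegral
    refine intervalIntegral.integral_congr (fun t ht => ?_)
    rw [uIcc_of_le (by norm_num : (0:ℝ) ≤ 1)] at ht
    have ht0 : (0:ℝ) ≤ t := ht.1
    have ht1 : (0:ℝ) ≤ 1 - t := by linarith [ht.2]
    have e1 : ((t:ℂ)) ^ ((c:ℂ) - 1) = ((t ^ (c - 1) : ℝ) : ℂ) := by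
      rw [show ((c:ℂ) - 1) = ((c - 1 : ℝ) : ℂ) by push_cast; ring, ← Complex.ofReal_cpow ht0]
    have e2 : (1 - (t:ℂ)) ^ (1 - (c:ℂ) - 1) = (((1 - t) ^ (-c) : ℝ) : ℂ) := by
      rw [show (1 - (t:ℂ)) = ((1 - t : ℝ) : ℂ) by push_cast; ring,
        show (1 - (c:ℂ) - 1) = ((-c : ℝ) : ℂ) by push_cast; ring, ← Complex.ofReal_cpow ht1]
    rw [e1, e2, ← Complex.ofReal_mul]
  have hG : Complex.Gamma c * Complex.Gamma (1 - c)
      = Complex.Gamma 1 * Complex.betaIntegral c (1 - c) := by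
    have := Complex.Gamma_mul_Gamma_eq_betaIntegral
      (s := (c:ℂ)) (t := ((1 - c : ℝ) : ℂ)) (by simpa using h0) (by simp; linarith)
    push_cast at this ⊢
    convert this using 2 <;> push_cast <;> ring
  rw [Complex.Gamma_one, one_mul, key] at hG
  have hR : Real.Gamma c * Real.Gamma (1 - c) = ∫ t in (0:ℝ)..1, t ^ (c - 1) * (1 - t) ^ (-c) := by
    have := hG
    rw [← Complex.ofReal_one, ← Complex.ofReal_sub, Complex.Gamma_ofReal,
      Complex.Gamma_ofReal, ← Complex.ofReal_mul] at this
    exact_mod_cast this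
  rw [← MeasureTheory.integral_Ioc_eq_integral_Ioo,
    ← intervalIntegral.integral_of_le (by norm_num : (0:ℝ) ≤ 1), ← hR,
    Real.Gamma_mul_Gamma_one_sub]


lemma rpadd2 {A : ℝ} (hA : 0 < A) {p q t : ℝ} (h : p + q = t) :
    A ^ p * A ^ q = A ^ t := by rw [← Real.rpow_add hA, h]

lemma rpadd3 {A : ℝ} (hA : 0 < A) {p q r t : ℝ} (h : p + q + r = t) :
    A ^ p * A ^ q * A ^ r = A ^ t := by rw [← Real.rpow_add hA, ← Real.rpow_add hA, h]

lemma rpadd4 {A : ℝ} (hA : 0 < A) {p q r w t : ℝ} (h : p + q + r + w = t) :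
    A ^ p * A ^ q * A ^ r * A ^ w = A ^ t := by
  rw [← Real.rpow_add hA, ← Real.rpow_add hA, ← Real.rpow_add hA, h]

lemma key_alg1 {k x s : ℝ} (hx0 : 0 < x) (hx1 : x < 1) (hs0 : 0 < s) (hs1 : s < 1) :
    x * (1 - x) / (1 - s * x) ^ 2 * ((x * s * (1 - x) / (1 - s * x)) ^ (k - 1)
      * ((1 - x) / (1 - s * x)) ^ ((1 - k) / 2) * (x * (1 - s) / (1 - s * x)) ^ (-(1 + k) / 2))
    = x ^ ((k - 1) / 2) * (1 - x) ^ ((1 + k) / 2)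
      * (s ^ (k - 1) * (1 - s) ^ (-(1 + k) / 2) * (1 - s * x)⁻¹) := by
  have hB : (0:ℝ) < 1 - x := by linarith
  have hT : (0:ℝ) < 1 - s := by linarith
  have hE : (0:ℝ) < 1 - s * x := by nlinarith
  have c1 : (x * s * (1 - x) / (1 - s * x)) ^ (k - 1)
      = x ^ (k - 1) * s ^ (k - 1) * (1 - x) ^ (k - 1) * (1 - s * x) ^ (-(k - 1)) := by
    rw [Real.div_rpow (by positivity) hE.le, Real.mul_rpow (by positivity) hB.le,
      Real.mul_rpow hx0.le hs0.le, Real.rpow_neg hE.le, div_eq_mul_inv]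
  have c2 : ((1 - x) / (1 - s * x)) ^ ((1 - k) / 2)
      = (1 - x) ^ ((1 - k) / 2) * (1 - s * x) ^ (-((1 - k) / 2)) := by
    rw [Real.div_rpow hB.le hE.le, Real.rpow_neg hE.le, div_eq_mul_inv]
  have c3 : (x * (1 - s) / (1 - s * x)) ^ (-(1 + k) / 2)
      = x ^ (-(1 + k) / 2) * (1 - s) ^ (-(1 + k) / 2) * (1 - s * x) ^ ((1 + k) / 2) := by
    rw [Real.div_rpow (by positivity) hE.le, Real.mul_rpow hx0.le hT.le,
      show ((1 - s * x):ℝ) ^ (-(1 + k) / 2) = ((1 - s * x) ^ ((1 + k) / 2))⁻¹ from by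
        rw [← Real.rpow_neg hE.le]; ring_nf,
      div_inv_eq_mul]
  have c4 : x * (1 - x) / (1 - s * x) ^ 2
      = x ^ (1:ℝ) * (1 - x) ^ (1:ℝ) * (1 - s * x) ^ (-(2:ℝ)) := by
    rw [Real.rpow_one, Real.rpow_one,
      show ((1 - s * x):ℝ) ^ (-(2:ℝ)) = ((1 - s * x) ^ (2:ℕ))⁻¹ from by
        rw [Real.rpow_neg hE.le]; norm_cast,
      div_eq_mul_inv]
  rw [c1, c2, c3, c4,
    show (x:ℝ) ^ ((k - 1) / 2) = x ^ (k - 1) * x ^ (-(1 + k) / 2) * x ^ (1:ℝ) from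
      (rpadd3 hx0 (by ring)).symm,
    show ((1 - x):ℝ) ^ ((1 + k) / 2)
        = (1 - x) ^ (k - 1) * (1 - x) ^ ((1 - k) / 2) * (1 - x) ^ (1:ℝ) from
      (rpadd3 hB (by ring)).symm,
    show ((1 - s * x):ℝ)⁻¹ = (1 - s * x) ^ (-(k - 1)) * (1 - s * x) ^ (-((1 - k) / 2))
        * (1 - s * x) ^ ((1 + k) / 2) * (1 - s * x) ^ (-(2:ℝ)) from by
      rw [← Real.rpow_neg_one]; exact (rpadd4 hE (by ring)).symm]
  ring

lemma key_alg2 {k x s : ℝ} (hx0 : 0 < x) (hx1 : x < 1) (hs0 : 0 < s) (hs1 : s < 1) :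
    x * (1 - x) / (1 - s * (1 - x)) ^ 2 * (-1 * (x * s * (1 - x) / (1 - s * (1 - x))) ^ (k - 1)
      * ((1 - x) * (1 - s) / (1 - s * (1 - x))) ^ ((1 - k) / 2)
      * (x / (1 - s * (1 - x))) ^ (-(1 + k) / 2))
    = -(x ^ ((k - 1) / 2) * (1 - x) ^ ((1 + k) / 2)
      * (s ^ (k - 1) * (1 - s) ^ ((1 - k) / 2) * (1 - s * (1 - x))⁻¹)) := by
  have hB : (0:ℝ) < 1 - x := by linarith
  have hT : (0:ℝ) < 1 - s := by linarith
  have hE : (0:ℝ) < 1 - s * (1 - x) := by nlinarith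
  have c1 : (x * s * (1 - x) / (1 - s * (1 - x))) ^ (k - 1)
      = x ^ (k - 1) * s ^ (k - 1) * (1 - x) ^ (k - 1) * (1 - s * (1 - x)) ^ (-(k - 1)) := by
    rw [Real.div_rpow (by positivity) hE.le, Real.mul_rpow (by positivity) hB.le,
      Real.mul_rpow hx0.le hs0.le, Real.rpow_neg hE.le, div_eq_mul_inv]
  have c2 : ((1 - x) * (1 - s) / (1 - s * (1 - x))) ^ ((1 - k) / 2)
      = (1 - x) ^ ((1 - k) / 2) * (1 - s) ^ ((1 - k) / 2)
        * (1 - s * (1 - x)) ^ (-((1 - k) / 2)) := by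
    rw [Real.div_rpow (by positivity) hE.le, Real.mul_rpow hB.le hT.le,
      Real.rpow_neg hE.le, div_eq_mul_inv]
  have c3 : (x / (1 - s * (1 - x))) ^ (-(1 + k) / 2)
      = x ^ (-(1 + k) / 2) * (1 - s * (1 - x)) ^ ((1 + k) / 2) := by
    rw [Real.div_rpow hx0.le hE.le,
      show ((1 - s * (1 - x)):ℝ) ^ (-(1 + k) / 2) = ((1 - s * (1 - x)) ^ ((1 + k) / 2))⁻¹ from by
        rw [← Real.rpow_neg hE.le]; ring_nf,
      div_inv_eq_mul]
  have c4 : x * (1 - x) / (1 - s * (1 - x)) ^ 2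
      = x ^ (1:ℝ) * (1 - x) ^ (1:ℝ) * (1 - s * (1 - x)) ^ (-(2:ℝ)) := by
    rw [Real.rpow_one, Real.rpow_one,
      show ((1 - s * (1 - x)):ℝ) ^ (-(2:ℝ)) = ((1 - s * (1 - x)) ^ (2:ℕ))⁻¹ from by
        rw [Real.rpow_neg hE.le]; norm_cast,
      div_eq_mul_inv]
  have expand :
      x * (1 - x) / (1 - s * (1 - x)) ^ 2 * ((x * s * (1 - x) / (1 - s * (1 - x))) ^ (k - 1)
        * ((1 - x) * (1 - s) / (1 - s * (1 - x))) ^ ((1 - k) / 2)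
        * (x / (1 - s * (1 - x))) ^ (-(1 + k) / 2))
      = x ^ ((k - 1) / 2) * (1 - x) ^ ((1 + k) / 2)
        * (s ^ (k - 1) * (1 - s) ^ ((1 - k) / 2) * (1 - s * (1 - x))⁻¹) := by
    rw [c1, c2, c3, c4,
      show (x:ℝ) ^ ((k - 1) / 2) = x ^ (k - 1) * x ^ (-(1 + k) / 2) * x ^ (1:ℝ) from
        (rpadd3 hx0 (by ring)).symm,
      show ((1 - x):ℝ) ^ ((1 + k) / 2)
          = (1 - x) ^ (k - 1) * (1 - x) ^ ((1 - k) / 2) * (1 - x) ^ (1:ℝ) from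
        (rpadd3 hB (by ring)).symm,
      show ((1 - s * (1 - x)):ℝ)⁻¹ = (1 - s * (1 - x)) ^ (-(k - 1))
          * (1 - s * (1 - x)) ^ (-((1 - k) / 2))
          * (1 - s * (1 - x)) ^ ((1 + k) / 2) * (1 - s * (1 - x)) ^ (-(2:ℝ)) from by
        rw [← Real.rpow_neg_one]; exact (rpadd4 hE (by ring)).symm]
    ring
  linear_combination -expand

lemma key_algpsi {k y s : ℝ} (hy : 0 < y) (hs0 : 0 < s) (hs1 : s < 1)
    (hD : 0 < 1 - s + y * s ^ 2) :
    (2 - s) / s ^ 3 * (((1 - s) / s ^ 2) ^ (-(1 + k) / 2) * (y + (1 - s) / s ^ 2)⁻¹)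
    = s ^ k * (1 - s) ^ (-(1 + k) / 2) * ((2 - s) * (1 - s + y * s ^ 2)⁻¹) := by
  have hT : (0:ℝ) < 1 - s := by linarith
  have hs2 : (0:ℝ) < s ^ 2 := by positivity
  have cy : y + (1 - s) / s ^ 2 = (1 - s + y * s ^ 2) / s ^ 2 := by field_simp; ring
  have c1 : ((1 - s) / s ^ 2) ^ (-(1 + k) / 2)
      = (1 - s) ^ (-(1 + k) / 2) * s ^ (1 + k) := by
    rw [Real.div_rpow hT.le hs2.le,
      show ((s:ℝ) ^ 2) ^ (-(1 + k) / 2) = s ^ (-(1 + k)) from by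
        rw [← Real.rpow_natCast s 2, ← Real.rpow_mul hs0.le]; congr 1; push_cast; ring,
      show (s:ℝ) ^ (-(1 + k)) = (s ^ (1 + k))⁻¹ from by rw [← Real.rpow_neg hs0.le],
      div_inv_eq_mul]
  have c2 : (s:ℝ) ^ (1:ℝ) * s ^ k = s ^ (1 + k) := rpadd2 hs0 (by norm_num)
  rw [cy, c1, ← c2, Real.rpow_one]
  have hDne : (1 - s + y * s ^ 2) ≠ 0 := ne_of_gt hD
  have hsne : s ≠ 0 := ne_of_gt hs0
  field_simp

lemma key_algomega {k y t : ℝ} (hy : 0 < y) (ht0 : 0 < t) (ht1 : t < 1) :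
    y / (1 - t) ^ 2 * ((y * t / (1 - t)) ^ (-(1 + k) / 2) * (y + y * t / (1 - t))⁻¹)
    = y ^ (-(1 + k) / 2) * (t ^ ((1 - k) / 2 - 1) * (1 - t) ^ (-((1 - k) / 2))) := by
  have hT : (0:ℝ) < 1 - t := by linarith
  have cy : y + y * t / (1 - t) = y / (1 - t) := by field_simp; ring
  have c1 : (y * t / (1 - t)) ^ (-(1 + k) / 2)
      = y ^ (-(1 + k) / 2) * t ^ (-(1 + k) / 2) * (1 - t) ^ ((1 + k) / 2) := by
    rw [Real.div_rpow (by positivity) hT.le, Real.mul_rpow hy.le ht0.le,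
      show ((1 - t):ℝ) ^ (-(1 + k) / 2) = ((1 - t) ^ ((1 + k) / 2))⁻¹ from by
        rw [← Real.rpow_neg hT.le]; ring_nf,
      div_inv_eq_mul]
  have c2 : (t:ℝ) ^ ((1 - k) / 2 - 1) = t ^ (-(1 + k) / 2) := by
    rw [show (1 - k) / 2 - 1 = -(1 + k) / 2 by ring]
  have c3 : ((1 - t):ℝ) ^ (-((1 - k) / 2)) * (1 - t) ^ (1:ℝ) = (1 - t) ^ ((1 + k) / 2) :=
    rpadd2 hT (by ring)
  rw [cy, c1, c2, ← c3, Real.rpow_one]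
  have hyne : y ≠ 0 := ne_of_gt hy
  field_simp

lemma key_comb {k x s : ℝ} (hx0 : 0 < x) (hx1 : x < 1) (hs0 : 0 < s) (hs1 : s < 1) :
    s ^ (k - 1) * (1 - s) ^ (-(1 + k) / 2) * (1 - s * x)⁻¹
      - s ^ (k - 1) * (1 - s) ^ ((1 - k) / 2) * (1 - s * (1 - x))⁻¹
    = x * (s ^ k * (1 - s) ^ (-(1 + k) / 2)
        * ((2 - s) * (1 - s + x * (1 - x) * s ^ 2)⁻¹)) := by
  have hT : (0:ℝ) < 1 - s := by linarith
  have hE1 : (0:ℝ) < 1 - s * x := by nlinarith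
  have hE2 : (0:ℝ) < 1 - s * (1 - x) := by nlinarith
  have hD : (0:ℝ) < 1 - s + x * (1 - x) * s ^ 2 := by nlinarith [mul_pos hE1 hE2]
  have e1 : ((1 - s):ℝ) ^ (-(1 + k) / 2) * (1 - s) ^ (1:ℝ) = (1 - s) ^ ((1 - k) / 2) :=
    rpadd2 hT (by ring)
  have e2 : (s:ℝ) ^ (k - 1) * s ^ (1:ℝ) = s ^ k := rpadd2 hs0 (by ring)
  have rat : (1 - s * x)⁻¹ - (1 - s) * (1 - s * (1 - x))⁻¹
      = x * s * (2 - s) * (1 - s + x * (1 - x) * s ^ 2)⁻¹ := by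
    rw [show (1 - s + x * (1 - x) * s ^ 2) = (1 - s * x) * (1 - s * (1 - x)) by ring]
    field_simp
    ring
  rw [← e1, ← e2]
  simp only [Real.rpow_one]
  linear_combination (s ^ (k - 1) * (1 - s) ^ (-(1 + k) / 2)) * rat

lemma him1' {x : ℝ} (hx0 : 0 < x) (hx1 : x < 1) :
    (fun s : ℝ => x * (1 - s) / (1 - s * x)) '' Ioo 0 1 = Ioo 0 x := by
  ext t
  simp only [mem_image, mem_Ioo]
  constructor
  · rintro ⟨s, ⟨hs0, hs1⟩, rfl⟩
    have hE : 0 < 1 - s * x := by nlinarith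
    constructor
    · exact div_pos (by nlinarith) hE
    · rw [div_lt_iff₀ hE]; nlinarith [mul_pos (mul_pos hx0 hs0) (sub_pos.mpr hx1)]
  · rintro ⟨ht0, htx⟩
    have h1t : 0 < 1 - t := by linarith
    have hd : 0 < x * (1 - t) := mul_pos hx0 h1t
    refine ⟨(x - t) / (x * (1 - t)), ⟨div_pos (by linarith) hd, ?_⟩, ?_⟩
    · rw [div_lt_one hd]; nlinarith
    · have e1 : 1 - (x - t) / (x * (1 - t)) = t * (1 - x) / (x * (1 - t)) := by
        field_simp; ring
      have e2 : 1 - (x - t) / (x * (1 - t)) * x = (1 - x) / (1 - t) := by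
        field_simp; ring
      rw [e1, e2]
      have h1x : (0:ℝ) < 1 - x := by linarith
      field_simp

lemma him2' {x : ℝ} (hx0 : 0 < x) (hx1 : x < 1) :
    (fun s : ℝ => x / (1 - s * (1 - x))) '' Ioo 0 1 = Ioo x 1 := by
  ext t
  simp only [mem_image, mem_Ioo]
  constructor
  · rintro ⟨s, ⟨hs0, hs1⟩, rfl⟩
    have hE : 0 < 1 - s * (1 - x) := by nlinarith
    constructor
    · rw [lt_div_iff₀ hE]; nlinarith [mul_pos (mul_pos hx0 hs0) (sub_pos.mpr hx1)]
    · rw [div_lt_one hE]; nlinarith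
  · rintro ⟨htx, ht1⟩
    have ht0 : 0 < t := lt_trans hx0 htx
    have h1x : (0:ℝ) < 1 - x := by linarith
    have hd : 0 < t * (1 - x) := mul_pos ht0 h1x
    refine ⟨(t - x) / (t * (1 - x)), ⟨div_pos (by linarith) hd, ?_⟩, ?_⟩
    · rw [div_lt_one hd]; nlinarith
    · have e : 1 - (t - x) / (t * (1 - x)) * (1 - x) = x / t := by
        field_simp; ring
      rw [e]
      field_simp

lemma himpsi : (fun s : ℝ => (1 - s) / s ^ 2) '' Ioo 0 1 = Ioi 0 := by
  ext v
  simp only [mem_image, mem_Ioo, mem_Ioi]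
  constructor
  · rintro ⟨s, ⟨hs0, hs1⟩, rfl⟩
    exact div_pos (by linarith) (by positivity)
  · intro hv
    have h4 : (0:ℝ) < 1 + 4 * v := by linarith
    set r := Real.sqrt (1 + 4 * v) with hr
    have hrpos : 0 < r := Real.sqrt_pos.mpr h4
    have hrsq : r ^ 2 = 1 + 4 * v := Real.sq_sqrt h4.le
    have hr1 : 1 < r := by
      nlinarith [hrsq, hrpos]
    have hrlt : r < 1 + 2 * v := by
      nlinarith [hrsq, hrpos, hv]
    refine ⟨(r - 1) / (2 * v), ⟨div_pos (by linarith) (by linarith), ?_⟩, ?_⟩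
    · rw [div_lt_one (by linarith)]; linarith
    · have hvne : (2:ℝ) * v ≠ 0 := by positivity
      have hfac : (r - 1) ^ 2 = 2 * (1 + 2 * v - r) := by linear_combination hrsq
      have hne2 : 1 + 2 * v - r ≠ 0 := ne_of_gt (by linarith)
      rw [div_pow, hfac]
      field_simp
      ring

lemma himomega {y : ℝ} (hy : 0 < y) :
    (fun t : ℝ => y * t / (1 - t)) '' Ioo 0 1 = Ioi 0 := by
  ext v
  simp only [mem_image, mem_Ioo, mem_Ioi]
  constructor
  · rintro ⟨t, ⟨ht0, ht1⟩, rfl⟩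
    exact div_pos (by nlinarith) (by linarith)
  · intro hv
    have hyv : 0 < y + v := by linarith
    refine ⟨v / (y + v), ⟨div_pos hv hyv, ?_⟩, ?_⟩
    · rw [div_lt_one hyv]; linarith
    · have e : 1 - v / (y + v) = y / (y + v) := by field_simp; ring
      rw [e]
      field_simp

theorem singular_integral_jacobi_const (k x : ℝ) (hk : k ∈ Set.Ioo (0:ℝ) 1)
    (hx : x ∈ Set.Ioo (0:ℝ) 1) :
    (∫ t in (0:ℝ)..1, Real.sign (x - t) * |x - t| ^ (k - 1)
        * (1 - t) ^ ((1 - k) / 2) * t ^ (-(1 + k) / 2))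
      = π / Real.sin ((1 - k) * π / 2) := by
  obtain ⟨hk0, hk1⟩ := hk
  obtain ⟨hx0, hx1⟩ := hx
  have h1x : 0 < 1 - x := by linarith
  have hy0 : 0 < x * (1 - x) := mul_pos hx0 h1x
  set F : ℝ → ℝ := fun t => Real.sign (x - t) * |x - t| ^ (k - 1)
      * (1 - t) ^ ((1 - k) / 2) * t ^ (-(1 + k) / 2) with hF
  set C : ℝ := x ^ ((k - 1)/2) * (1 - x) ^ ((1 + k)/2) with hC
  set g1 : ℝ → ℝ := fun s => s ^ (k - 1) * (1 - s) ^ (-(1 + k) / 2) * (1 - s * x)⁻¹ with hg1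
  set g2 : ℝ → ℝ := fun s => s ^ (k - 1) * (1 - s) ^ ((1 - k)/2) * (1 - s * (1 - x))⁻¹ with hg2
  set hh : ℝ → ℝ := fun s => s ^ k * (1 - s) ^ (-(1 + k) / 2)
      * ((2 - s) * (1 - s + x * (1 - x) * s ^ 2)⁻¹) with hhh
  set e : ℝ → ℝ := fun v => v ^ (-(1 + k) / 2) * (x * (1 - x) + v)⁻¹ with he
  set bet : ℝ → ℝ := fun t => t ^ ((1 - k)/2 - 1) * (1 - t) ^ (-((1 - k)/2)) with hbet
  have hden1 : ∀ s ∈ Ioo (0:ℝ) 1, 0 < 1 - s * x := by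
    intro s hs; nlinarith [hs.1, hs.2]
  have hden2 : ∀ s ∈ Ioo (0:ℝ) 1, 0 < 1 - s * (1 - x) := by
    intro s hs; nlinarith [hs.1, hs.2]
  have hdenD : ∀ s ∈ Ioo (0:ℝ) 1, 0 < 1 - s + x * (1 - x) * s ^ 2 := by
    intro s hs; nlinarith [hden1 s hs, hden2 s hs, hs.1]
  set φ₁ : ℝ → ℝ := fun s => x * (1 - s) / (1 - s * x) with hφ₁
  set φ₂ : ℝ → ℝ := fun s => x / (1 - s * (1 - x)) with hφ₂
  set ψ : ℝ → ℝ := fun s => (1 - s) / s ^ 2 with hψ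
  set ω : ℝ → ℝ := fun t => x * (1 - x) * t / (1 - t) with hω
  -- derivatives
  have hd1 : ∀ s ∈ Ioo (0:ℝ) 1, HasDerivAt φ₁ (-(x * (1 - x)) / (1 - s * x) ^ 2) s := by
    intro s hs
    have h := hden1 s hs
    have hnum : HasDerivAt (fun u : ℝ => x * (1 - u)) (x * (0 - 1)) s :=
      ((hasDerivAt_const s (1:ℝ)).sub (hasDerivAt_id s)).const_mul x
    have hden : HasDerivAt (fun u : ℝ => 1 - u * x) (0 - 1 * x) s :=
      (hasDerivAt_const s (1:ℝ)).sub ((hasDerivAt_id s).mul_const x)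
    have H := hnum.div hden (ne_of_gt h)
    have hval : -(x * (1 - x)) / (1 - s * x) ^ 2
        = (x * (0 - 1) * (1 - s * x) - x * (1 - s) * (0 - 1 * x)) / (1 - s * x) ^ 2 := by
      field_simp; ring
    rw [hφ₁, hval]; exact H
  have hd2 : ∀ s ∈ Ioo (0:ℝ) 1, HasDerivAt φ₂ (x * (1 - x) / (1 - s * (1 - x)) ^ 2) s := by
    intro s hs
    have h := hden2 s hs
    have hnum : HasDerivAt (fun _ : ℝ => x) 0 s := hasDerivAt_const s x
    have hden : HasDerivAt (fun u : ℝ => 1 - u * (1 - x)) (0 - 1 * (1 - x)) s :=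
      (hasDerivAt_const s (1:ℝ)).sub ((hasDerivAt_id s).mul_const (1 - x))
    have H := hnum.div hden (ne_of_gt h)
    have hval : x * (1 - x) / (1 - s * (1 - x)) ^ 2
        = (0 * (1 - s * (1 - x)) - x * (0 - 1 * (1 - x))) / (1 - s * (1 - x)) ^ 2 := by
      field_simp; ring
    rw [hφ₂, hval]; exact H
  have hdψ : ∀ s ∈ Ioo (0:ℝ) 1, HasDerivAt ψ ((s - 2) / s ^ 3) s := by
    intro s hs
    have h0 : s ≠ 0 := ne_of_gt hs.1
    have hnum : HasDerivAt (fun u : ℝ => 1 - u) (0 - 1) s :=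
      (hasDerivAt_const s (1:ℝ)).sub (hasDerivAt_id s)
    have hden : HasDerivAt (fun u : ℝ => u ^ 2) (2 * s ^ 1) s := by
      simpa using hasDerivAt_pow 2 s
    have H := hnum.div hden (pow_ne_zero 2 h0)
    have hval : (s - 2) / s ^ 3
        = ((0 - 1) * s ^ 2 - (1 - s) * (2 * s ^ 1)) / (s ^ 2) ^ 2 := by
      field_simp; ring
    rw [hψ, hval]; exact H
  have hdω : ∀ t ∈ Ioo (0:ℝ) 1, HasDerivAt ω (x * (1 - x) / (1 - t) ^ 2) t := by
    intro t ht
    have h : (0:ℝ) < 1 - t := by linarith [ht.2]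
    have hnum : HasDerivAt (fun u : ℝ => x * (1 - x) * u) (x * (1 - x) * 1) t :=
      (hasDerivAt_id t).const_mul (x * (1 - x))
    have hden : HasDerivAt (fun u : ℝ => 1 - u) (0 - 1) t :=
      (hasDerivAt_const t (1:ℝ)).sub (hasDerivAt_id t)
    have H := hnum.div hden (ne_of_gt h)
    have hval : x * (1 - x) / (1 - t) ^ 2
        = (x * (1 - x) * 1 * (1 - t) - x * (1 - x) * t * (0 - 1)) / (1 - t) ^ 2 := by
      field_simp; ring
    rw [hω, hval]; exact H
  -- injectivity
  have hinj1 : Set.InjOn φ₁ (Ioo 0 1) := by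
    intro s hs s' hs' hss
    have h := hden1 s hs; have h' := hden1 s' hs'
    rw [hφ₁] at hss; simp only at hss
    rw [div_eq_div_iff (ne_of_gt h) (ne_of_gt h')] at hss
    have : x * (1 - x) * (s' - s) = 0 := by linear_combination hss
    have := mul_eq_zero.mp this
    rcases this with h0 | h0
    · exact absurd h0 (ne_of_gt hy0)
    · linarith
  have hinj2 : Set.InjOn φ₂ (Ioo 0 1) := by
    intro s hs s' hs' hss
    have h := hden2 s hs; have h' := hden2 s' hs'
    rw [hφ₂] at hss; simp only at hss
    rw [div_eq_div_iff (ne_of_gt h) (ne_of_gt h')] at hss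
    have : x * (1 - x) * (s - s') = 0 := by linear_combination hss
    rcases mul_eq_zero.mp this with h0 | h0
    · exact absurd h0 (ne_of_gt hy0)
    · linarith
  have hinjψ : Set.InjOn ψ (Ioo 0 1) := by
    intro s hs s' hs' hss
    rw [hψ] at hss; simp only at hss
    rw [div_eq_div_iff (ne_of_gt (pow_pos hs.1 2)) (ne_of_gt (pow_pos hs'.1 2))] at hss
    have key : (s' - s) * (s + s' - s * s') = 0 := by linear_combination hss
    rcases mul_eq_zero.mp key with h0 | h0
    · linarith
    · nlinarith [hs.1, hs'.1, hs.2, hs'.2]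
  have hinjω : Set.InjOn ω (Ioo 0 1) := by
    intro s hs s' hs' hss
    have h : (0:ℝ) < 1 - s := by linarith [hs.2]
    have h' : (0:ℝ) < 1 - s' := by linarith [hs'.2]
    rw [hω] at hss; simp only at hss
    rw [div_eq_div_iff (ne_of_gt h) (ne_of_gt h')] at hss
    have : x * (1 - x) * (s - s') = 0 := by linear_combination hss
    rcases mul_eq_zero.mp this with h0 | h0
    · exact absurd h0 (ne_of_gt hy0)
    · linarith
  -- images
  have him1 : φ₁ '' Ioo 0 1 = Ioo 0 x := by rw [hφ₁]; exact him1' hx0 hx1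
  have him2 : φ₂ '' Ioo 0 1 = Ioo x 1 := by rw [hφ₂]; exact him2' hx0 hx1
  have himψ : ψ '' Ioo 0 1 = Ioi 0 := by rw [hψ]; exact himpsi
  have himω : ω '' Ioo 0 1 = Ioi 0 := by rw [hω]; exact himomega hy0
  -- pointwise keys
  have key1 : Set.EqOn (fun s => |(-(x * (1 - x)) / (1 - s * x) ^ 2)| * F (φ₁ s))
      (fun s => C * g1 s) (Ioo 0 1) := by
    intro s hs
    obtain ⟨hs0, hs1⟩ := hs
    have hE : 0 < 1 - s * x := hden1 s ⟨hs0, hs1⟩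
    have hEne : (1:ℝ) - s * x ≠ 0 := ne_of_gt hE
    simp only [hF, hφ₁, hC, hg1]
    have fx : x - x * (1 - s) / (1 - s * x) = x * s * (1 - x) / (1 - s * x) := by
      rw [eq_div_iff hEne, sub_mul, div_mul_cancel₀ _ hEne]; ring
    have f1 : 1 - x * (1 - s) / (1 - s * x) = (1 - x) / (1 - s * x) := by
      rw [eq_div_iff hEne, sub_mul, div_mul_cancel₀ _ hEne]; ring
    rw [fx, f1]
    have fxpos : 0 < x * s * (1 - x) / (1 - s * x) :=
      div_pos (mul_pos (mul_pos hx0 hs0) h1x) hE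
    rw [Real.sign_of_pos fxpos, abs_of_pos fxpos,
      abs_of_neg (show -(x * (1 - x)) / (1 - s * x) ^ 2 < 0 from
        div_neg_of_neg_of_pos (neg_lt_zero.mpr hy0) (pow_pos hE 2))]
    linear_combination key_alg1 (k := k) hx0 hx1 hs0 hs1
  have key2 : Set.EqOn (fun s => |(x * (1 - x) / (1 - s * (1 - x)) ^ 2)| * F (φ₂ s))
      (fun s => -(C * g2 s)) (Ioo 0 1) := by
    intro s hs
    obtain ⟨hs0, hs1⟩ := hs
    have hE : 0 < 1 - s * (1 - x) := hden2 s ⟨hs0, hs1⟩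
    have hEne : (1:ℝ) - s * (1 - x) ≠ 0 := ne_of_gt hE
    simp only [hF, hφ₂, hC, hg2]
    have fx : x - x / (1 - s * (1 - x)) = -(x * s * (1 - x)) / (1 - s * (1 - x)) := by
      field_simp; ring
    have f1 : 1 - x / (1 - s * (1 - x)) = (1 - x) * (1 - s) / (1 - s * (1 - x)) := by
      field_simp; ring
    rw [fx, f1]
    have fxneg : -(x * s * (1 - x)) / (1 - s * (1 - x)) < 0 :=
      div_neg_of_neg_of_pos (neg_lt_zero.mpr (mul_pos (mul_pos hx0 hs0) h1x)) hE
    rw [Real.sign_of_neg fxneg, abs_of_neg fxneg, neg_div, neg_neg,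
      abs_of_pos (show 0 < x * (1 - x) / (1 - s * (1 - x)) ^ 2 from
        div_pos hy0 (pow_pos hE 2))]
    linear_combination key_alg2 (k := k) hx0 hx1 hs0 hs1
  have keyψ : Set.EqOn (fun s => |((s - 2) / s ^ 3)| * e (ψ s)) hh (Ioo 0 1) := by
    intro s hs
    obtain ⟨hs0, hs1⟩ := hs
    have hD : 0 < 1 - s + x * (1 - x) * s ^ 2 := hdenD s ⟨hs0, hs1⟩
    simp only [he, hψ, hhh]
    rw [abs_of_neg (show (s - 2) / s ^ 3 < 0 from
      div_neg_of_neg_of_pos (by linarith) (pow_pos hs0 3))]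
    linear_combination key_algpsi (k := k) hy0 hs0 hs1 hD
  have keyω : Set.EqOn (fun t => |(x * (1 - x) / (1 - t) ^ 2)| * e (ω t))
      (fun t => (x * (1 - x)) ^ (-(1 + k)/2) * bet t) (Ioo 0 1) := by
    intro t ht
    obtain ⟨ht0, ht1⟩ := ht
    have h1t : (0:ℝ) < 1 - t := by linarith
    simp only [he, hω, hbet]
    rw [abs_of_pos (show 0 < x * (1 - x) / (1 - t) ^ 2 from div_pos hy0 (pow_pos h1t 2))]
    linear_combination key_algomega (k := k) hy0 ht0 ht1
  have keyComb : Set.EqOn (fun s => g1 s - g2 s) (fun s => x * hh s) (Ioo 0 1) := by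
    intro s hs
    obtain ⟨hs0, hs1⟩ := hs
    simp only [hg1, hg2, hhh]
    exact key_comb hx0 hx1 hs0 hs1
  -- integrability
  have intg1 : IntegrableOn g1 (Ioo (0:ℝ) 1) := by
    refine integrableOn_aux (by linarith) (by linarith) (c := fun s => (1 - s * x)⁻¹) ?_
    refine ContinuousOn.inv₀ (by fun_prop) ?_
    intro z hz; simp only [mem_Icc] at hz; nlinarith [hz.1, hz.2]
  have intg2 : IntegrableOn g2 (Ioo (0:ℝ) 1) := by
    refine integrableOn_aux (by linarith) (by linarith) (c := fun s => (1 - s * (1 - x))⁻¹) ?_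
    refine ContinuousOn.inv₀ (by fun_prop) ?_
    intro z hz; simp only [mem_Icc] at hz; nlinarith [hz.1, hz.2]
  have inth : IntegrableOn hh (Ioo (0:ℝ) 1) := by
    refine integrableOn_aux (by linarith) (by linarith)
      (c := fun s => (2 - s) * (1 - s + x * (1 - x) * s ^ 2)⁻¹) ?_
    refine ContinuousOn.mul (by fun_prop) (ContinuousOn.inv₀ (by fun_prop) ?_)
    intro z hz; simp only [mem_Icc] at hz
    have p1 : 0 < 1 - z * x := by nlinarith [hz.1, hz.2]
    have p2 : 0 < 1 - z * (1 - x) := by nlinarith [hz.1, hz.2]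
    nlinarith [mul_pos p1 p2]
  -- transformed piece integrals
  have E1 : ∫ t in Ioo 0 x, F t = C * ∫ s in Ioo (0:ℝ) 1, g1 s := by
    rw [← him1, subst_eq measurableSet_Ioo hd1 hinj1 F,
      setIntegral_congr_fun measurableSet_Ioo key1, MeasureTheory.integral_const_mul]
  have E2 : ∫ t in Ioo x 1, F t = -(C * ∫ s in Ioo (0:ℝ) 1, g2 s) := by
    rw [← him2, subst_eq measurableSet_Ioo hd2 hinj2 F,
      setIntegral_congr_fun measurableSet_Ioo key2, MeasureTheory.integral_neg, MeasureTheory.integral_const_mul]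
  have IF1 : IntegrableOn F (Ioo 0 x) := by
    rw [← him1, subst_int measurableSet_Ioo hd1 hinj1 F]
    exact (IntegrableOn.congr_fun (intg1.const_mul C) (fun s hs => (key1 hs).symm) measurableSet_Ioo)
  have IF2 : IntegrableOn F (Ioo x 1) := by
    rw [← him2, subst_int measurableSet_Ioo hd2 hinj2 F]
    exact (IntegrableOn.congr_fun ((intg2.const_mul C).neg) (fun s hs => (key2 hs).symm) measurableSet_Ioo)
  -- split
  have Esplit : ∫ t in Ioo (0:ℝ) 1, F t = (∫ t in Ioo 0 x, F t) + ∫ t in Ioo x 1, F t := by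
    rw [← MeasureTheory.integral_Ioc_eq_integral_Ioo,
      ← Set.Ioc_union_Ioc_eq_Ioc hx0.le hx1.le,
      MeasureTheory.setIntegral_union (Set.Ioc_disjoint_Ioc_of_le le_rfl) measurableSet_Ioc
        ((integrableOn_Ioc_iff_integrableOn_Ioo).mpr IF1)
        ((integrableOn_Ioc_iff_integrableOn_Ioo).mpr IF2),
      MeasureTheory.integral_Ioc_eq_integral_Ioo, MeasureTheory.integral_Ioc_eq_integral_Ioo]
  -- combine
  have Ecomb : (∫ s in Ioo (0:ℝ) 1, g1 s) - ∫ s in Ioo (0:ℝ) 1, g2 s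
      = x * ∫ s in Ioo (0:ℝ) 1, hh s := by
    rw [← MeasureTheory.integral_sub intg1 intg2,
      setIntegral_congr_fun measurableSet_Ioo keyComb, MeasureTheory.integral_const_mul]
  have Eψ : ∫ v in Ioi (0:ℝ), e v = ∫ s in Ioo (0:ℝ) 1, hh s := by
    rw [← himψ, subst_eq measurableSet_Ioo hdψ hinjψ e,
      setIntegral_congr_fun measurableSet_Ioo keyψ]
  have Eω : ∫ v in Ioi (0:ℝ), e v
      = (x * (1 - x)) ^ (-(1 + k) / 2) * ∫ t in Ioo (0:ℝ) 1, bet t := by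
    rw [← himω, subst_eq measurableSet_Ioo hdω hinjω e,
      setIntegral_congr_fun measurableSet_Ioo keyω, MeasureTheory.integral_const_mul]
  have Ebeta : ∫ t in Ioo (0:ℝ) 1, bet t = π / Real.sin (π * ((1 - k)/2)) := by
    rw [hbet]; exact beta_eval (by linarith) (by linarith)
  -- final computation
  have hxpow : C * x * ((x * (1 - x)) ^ (-(1 + k) / 2)) = 1 := by
    have e1 : x ^ ((k - 1)/2) * x ^ (-(1 + k) / 2) = x⁻¹ := by
      rw [← Real.rpow_add hx0, show (k - 1)/2 + -(1 + k) / 2 = (-1 : ℝ) by ring,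
        Real.rpow_neg_one]
    have e2 : (1 - x) ^ ((1 + k)/2) * (1 - x) ^ (-(1 + k) / 2) = 1 := by
      rw [← Real.rpow_add h1x, show (1 + k)/2 + -(1 + k) / 2 = (0:ℝ) by ring, Real.rpow_zero]
    rw [hC, Real.mul_rpow hx0.le h1x.le,
      show x ^ ((k - 1)/2) * (1 - x) ^ ((1 + k)/2) * x
          * (x ^ (-(1 + k) / 2) * (1 - x) ^ (-(1 + k) / 2))
        = (x ^ ((k - 1)/2) * x ^ (-(1 + k) / 2))
          * ((1 - x) ^ ((1 + k)/2) * (1 - x) ^ (-(1 + k) / 2)) * x from by ring, e1, e2]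
    field_simp
  calc (∫ t in (0:ℝ)..1, F t)
      = ∫ t in Ioo (0:ℝ) 1, F t := by
        rw [intervalIntegral.integral_of_le (by norm_num : (0:ℝ) ≤ 1),
          MeasureTheory.integral_Ioc_eq_integral_Ioo]
    _ = (∫ t in Ioo 0 x, F t) + ∫ t in Ioo x 1, F t := Esplit
    _ = C * ((∫ s in Ioo (0:ℝ) 1, g1 s) - ∫ s in Ioo (0:ℝ) 1, g2 s) := by
        rw [E1, E2]; ring
    _ = C * (x * ∫ s in Ioo (0:ℝ) 1, hh s) := by rw [Ecomb]
    _ = C * (x * ((x * (1 - x)) ^ (-(1 + k) / 2) * (π / Real.sin (π * ((1 - k)/2))))) := by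
        rw [← Eψ, Eω, Ebeta]
    _ = π / Real.sin ((1 - k) * π / 2) := by
        rw [show Real.sin (π * ((1 - k)/2)) = Real.sin ((1 - k) * π / 2) by ring_nf]
        rw [show C * (x * ((x * (1 - x)) ^ (-(1 + k) / 2) * (π / Real.sin ((1 - k) * π / 2))))
          = (C * x * ((x * (1 - x)) ^ (-(1 + k) / 2))) * (π / Real.sin ((1 - k) * π / 2)) by ring]
        rw [hxpow, one_mul]
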